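/- arXiv:1506.08280 — 2 statements merged into one kernel-verified Lean document; each statement's English description precedes it below -/
import Mathlib

section
/- A bornologous function f : X → Y between metric spaces is coarsely n-to-1 if and only if for every R > 0 there exists S > 0 such that whenever x₁,…,x_{n+1} is a sequence of n+1 points in X with d(x_i,x_j) > S for all i ≠ j, there exist two different indices k, m ≤ n+1 with d(f(x_k),f(x_m)) > R. -/
open Filter Metric Set

noncomputable section

namespace Gromov

variable {X : Type*} [MetricSpace X] {Y : Type*} [MetricSpace Y]

/-- The Gromov product `(x,y)_a = (d(x,a)+d(y,a)-d(x,y))/2`. -/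
def gp (a x y : X) : ℝ := (dist x a + dist y a - dist x y) / 2

/-- Gromov `δ`-hyperbolicity via the `δ/4`-inequality. -/
def IsDeltaHyperbolic (X : Type*) [MetricSpace X] (δ : ℝ) : Prop :=
  ∀ x y z w : X, gp w x y ≥ min (gp w x z) (gp w z y) - δ / 4

/-- `γ` is a geodesic starting at `x`, parametrized by arclength on `[0, M]`. -/
def IsGeodesicOn (γ : ℝ → X) (x : X) (M : ℝ) : Prop :=
  γ 0 = x ∧ ∀ s ∈ Icc (0:ℝ) M, ∀ t ∈ Icc (0:ℝ) M, dist (γ s) (γ t) = |s - t|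

/-- Every two points are joined by a geodesic. -/
def IsGeodesicSpace (X : Type*) [MetricSpace X] : Prop :=
  ∀ x y : X, ∃ γ : ℝ → X, IsGeodesicOn γ x (dist x y) ∧ γ (dist x y) = y

/-- An infinite geodesic ray emanating from `x`. -/
def IsRay (γ : ℝ → X) (x : X) : Prop :=
  γ 0 = x ∧ ∀ s ∈ Ici (0:ℝ), ∀ t ∈ Ici (0:ℝ), dist (γ s) (γ t) = |s - t|

/-- `f` is `(l, μ)`-large scale Lipschitz. -/
def IsLSL (f : X → Y) (l μ : ℝ) : Prop :=
  ∀ x y : X, dist (f x) (f y) ≤ l * dist x y + μ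

/-- `f` is large scale Lipschitz. -/
def LSL (f : X → Y) : Prop := ∃ l μ : ℝ, 0 < l ∧ 0 < μ ∧ IsLSL f l μ

/-- The `(l2, μ2)`-radial lower bound condition with respect to `x₀`:
on every finite geodesic emanating from `x₀`, `l2·d(x,y) - μ2 ≤ d(f(x),f(y))`. -/
def IsRadialWith (f : X → Y) (x₀ : X) (l2 μ2 : ℝ) : Prop :=
  ∀ M, 0 ≤ M → ∀ γ : ℝ → X, IsGeodesicOn γ x₀ M →
    ∀ s ∈ Icc (0:ℝ) M, ∀ t ∈ Icc (0:ℝ) M,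
      l2 * dist (γ s) (γ t) - μ2 ≤ dist (f (γ s)) (f (γ t))

/-- `f` is a radial function with respect to `x₀`. -/
def Radial (f : X → Y) (x₀ : X) : Prop :=
  LSL f ∧ ∃ l2 μ2 : ℝ, 0 < l2 ∧ 0 < μ2 ∧ IsRadialWith f x₀ l2 μ2

/-- `f` is visual: for some basepoint `a`, `(x_n,y_n)_a → ∞` implies
`(f(x_n),f(y_n))_{f(a)} → ∞`. -/
def VisualFn (f : X → Y) : Prop :=
  ∃ a : X, ∀ x y : ℕ → X,
    Tendsto (fun n => gp a (x n) (y n)) atTop atTop →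
    Tendsto (fun n => gp (f a) (f (x n)) (f (y n))) atTop atTop

/-- `liminf_{i,j→∞} (x_i,x_j)_a = ∞`: the sequence converges to infinity. -/
def ConvSeq (a : X) (x : ℕ → X) : Prop :=
  Tendsto (fun p : ℕ × ℕ => gp a (x p.1) (x p.2)) atTop atTop

/-- `liminf_{i,j→∞} (x_i,y_j)_a = ∞`: the two sequences are equivalent. -/
def SeqEquiv (a : X) (x y : ℕ → X) : Prop :=
  Tendsto (fun p : ℕ × ℕ => gp a (x p.1) (y p.2)) atTop atTop

def BSeq (a : X) : Type _ := {x : ℕ → X // ConvSeq a x}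

/-- The sequential boundary `∂X` with basepoint `a`. -/
def Boundary (a : X) : Type _ := Quot (fun x y : BSeq a => SeqEquiv a x.1 y.1)

/-- The boundary point represented by a sequence. -/
def bpt (a : X) (x : ℕ → X) (hx : ConvSeq a x) : Boundary a :=
  Quot.mk _ ⟨x, hx⟩

/-- `liminf_{i,j→∞} (x_i,y_j)_a` as an extended real. -/
def gpSeqs (a : X) (x y : ℕ → X) : EReal :=
  liminf (fun p : ℕ × ℕ => ((gp a (x p.1) (y p.2)) : EReal)) atTop

/-- The basic neighborhood `U(p,r)` in the sequential boundary. -/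
def U (a : X) (p : Boundary a) (r : ℝ) : Set (Boundary a) :=
  {q | ∃ (x y : ℕ → X) (hx : ConvSeq a x) (hy : ConvSeq a y),
    bpt a x hx = p ∧ bpt a y hy = q ∧ (r : EReal) ≤ gpSeqs a x y}

instance (a : X) : TopologicalSpace (Boundary a) :=
  TopologicalSpace.generateFrom {s | ∃ p r, 0 < r ∧ s = U a p r}

/-- The union `X ∪ ∂X`. -/
def Comp (a : X) : Type _ := X ⊕ Boundary a

def Comp.inl {a : X} (x : X) : Comp a := Sum.inl x
def Comp.inr {a : X} (p : Boundary a) : Comp a := Sum.inr p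

/-- The extension of `U(p,r)` to `X ∪ ∂X`. -/
def UFull (a : X) (p : Boundary a) (r : ℝ) : Set (Comp a) :=
  {z : X ⊕ Boundary a | Sum.elim
    (fun x : X => ∃ (s : ℕ → X) (hs : ConvSeq a s), bpt a s hs = p ∧
      (r : EReal) ≤ liminf (fun i : ℕ => ((gp a (s i) x) : EReal)) atTop)
    (fun q : Boundary a => q ∈ U a p r) z}

instance (a : X) : TopologicalSpace (Comp a) :=
  TopologicalSpace.generateFrom
    ({s | ∃ u : Set X, IsOpen u ∧ s = Comp.inl '' u} ∪
     {s | ∃ p r, 0 < r ∧ s = UFull a p r})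

/-- The Gromov product of two boundary points:
`(p,q)_a = inf liminf_{i→∞} (x_i,y_i)_a` over representatives. -/
def gpBoundary (a : X) (p q : Boundary a) : EReal :=
  sInf {e : EReal | ∃ (x y : ℕ → X) (hx : ConvSeq a x) (hy : ConvSeq a y),
    bpt a x hx = p ∧ bpt a y hy = q ∧
    e = liminf (fun i : ℕ => ((gp a (x i) (y i)) : EReal)) atTop}

/-- `K^{-e}` for an extended real exponent `e` (with `K^{-∞} = 0`). -/
def negPow (K : ℝ) (e : EReal) : ℝ :=
  if e = ⊤ then 0 else if e = ⊥ then 0 else Real.rpow K (-(e.toReal))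

/-- `d` is a visual metric on `∂X` with parameters `K, C > 1`. -/
def IsVisualMetric (a : X) (d : Boundary a → Boundary a → ℝ) (K C : ℝ) : Prop :=
  1 < K ∧ 1 < C ∧ ∀ p q : Boundary a,
    negPow K (gpBoundary a p q) / C ≤ d p q ∧ d p q ≤ C * negPow K (gpBoundary a p q)

/-- A map between sets with distinguished distance functions is Hölder. -/
def IsHolder {A B : Type*} (dA : A → A → ℝ) (dB : B → B → ℝ) (g : A → B) : Prop :=
  ∃ L α : ℝ, 0 < L ∧ 0 < α ∧ ∀ p q : A, dB (g p) (g q) ≤ L * Real.rpow (dA p q) α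

/-- `(ξ₁,ξ₂)_a = liminf_{t→∞} (ξ₁(t),ξ₂(t))_a` for rays. -/
def gpRays (a : X) (ξ₁ ξ₂ : ℝ → X) : EReal :=
  liminf (fun t : ℝ => ((gp a (ξ₁ t) (ξ₂ t)) : EReal)) atTop

/-- The geodesic ray `ξ` represents the boundary point `p`. -/
def RayRepresents (a : X) (ξ : ℝ → X) (p : Boundary a) : Prop :=
  ∃ h : ConvSeq a (fun n : ℕ => ξ n), bpt a (fun n : ℕ => ξ n) h = p

/-- `(x,ξ)_a = liminf_{n→∞} (x,ξ(n))_a`. -/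
def gpPointRay (a x : X) (ξ : ℝ → X) : ℝ :=
  liminf (fun n : ℕ => gp a x (ξ n)) atTop

/-- `X` is a visual hyperbolic space with basepoint `a` and constant `D`. -/
def IsVisualSpace (a : X) (D : ℝ) : Prop :=
  ∀ x : X, ∃ ξ : ℝ → X, IsRay ξ a ∧ gpPointRay a x ξ > dist x a - D

/-- A maximal finite geodesic from `a`: it admits no proper geodesic extension. -/
def MaximalGeodesic (ζ : ℝ → X) (a : X) (M : ℝ) : Prop :=
  IsGeodesicOn ζ a M ∧
    ¬ ∃ (M' : ℝ) (ζ' : ℝ → X), M < M' ∧ IsGeodesicOn ζ' a M' ∧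
      ∀ t ∈ Icc (0:ℝ) M, ζ' t = ζ t

/-- `f : X → Y` is a radial extension with parameter `A` of `g : ∂X → ∂Y`
(`D` being the visuality constant of `X`). -/
def IsRadialExtension (a : X) (b : Y) (g : Boundary a → Boundary b)
    (A D : ℝ) (f : X → Y) : Prop :=
  f a = b ∧
  ∀ x : X, x ≠ a →
    ((∃ (ξ : ℝ → X) (t : ℝ), IsRay ξ a ∧ 0 ≤ t ∧ ξ t = x) →
      ∃ (ξ : ℝ → X) (t : ℝ) (η : ℝ → Y), IsRay ξ a ∧ 0 ≤ t ∧ ξ t = x ∧ IsRay η b ∧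
        (∃ p : Boundary a, RayRepresents a ξ p ∧ RayRepresents b η (g p)) ∧
        f x = η (A * t)) ∧
    ((¬ ∃ (ξ : ℝ → X) (t : ℝ), IsRay ξ a ∧ 0 ≤ t ∧ ξ t = x) →
      ∃ (M t : ℝ) (ζ ξ : ℝ → X) (η : ℝ → Y),
        MaximalGeodesic ζ a M ∧ t ∈ Icc (0:ℝ) M ∧ ζ t = x ∧
        IsRay ξ a ∧ gpPointRay a (ζ M) ξ > dist (ζ M) a - D ∧ IsRay η b ∧
        (∃ p : Boundary a, RayRepresents a ξ p ∧ RayRepresents b η (g p)) ∧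
        f x = η (A * t))

/-- `f` is coarsely surjective. -/
def CoarselySurjective (f : X → Y) : Prop :=
  ∃ S : ℝ, 0 < S ∧ ∀ y : Y, ∃ x : X, dist y (f x) ≤ S

/-- `f` is bornologous (coarse). -/
def Bornologous (f : X → Y) : Prop :=
  ∀ R : ℝ, 0 < R → ∃ S : ℝ, 0 < S ∧ ∀ x x' : X, dist x x' ≤ R → dist (f x) (f x') ≤ S

/-- `f` is a coarse embedding. -/
def CoarseEmbedding (f : X → Y) : Prop :=
  Bornologous f ∧
    ∀ R : ℝ, 0 < R → ∃ S : ℝ, 0 < S ∧ ∀ x x' : X, dist (f x) (f x') ≤ R → dist x x' ≤ S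

/-- `f` is coarsely `n`-to-1. -/
def CoarselyNto1 (f : X → Y) (n : ℕ) : Prop :=
  ∀ R : ℝ, 0 < R → ∃ S : ℝ, 0 < S ∧ ∀ A : Set Y, EMetric.diam A < ENNReal.ofReal R →
    ∃ B : Fin n → Set X, (f ⁻¹' A = ⋃ i, B i) ∧
      ∀ i, EMetric.diam (B i) < ENNReal.ofReal S

/-- `g : ∂X → ∂Y` is the boundary map induced by `f`, i.e. `g [(x_n)] = [(f(x_n))]`. -/
def InducedBoundaryMap (a : X) (f : X → Y) (g : Boundary a → Boundary (f a)) : Prop :=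
  ∀ (x : ℕ → X) (hx : ConvSeq a x) (hfx : ConvSeq (f a) (f ∘ x)),
    g (bpt a x hx) = bpt (f a) (f ∘ x) hfx

/-- `g` is (at most) `n`-to-1. -/
def NTo1 {A B : Type*} (g : A → B) (n : ℕ) : Prop :=
  ∀ b : B, ∃ s : Finset A, s.card ≤ n ∧ ∀ a : A, g a = b → a ∈ s

/-- Covering dimension at most `n`: every open cover admits an open refinement
of multiplicity at most `n+1`. -/
def CovDimLE (Z : Type*) [TopologicalSpace Z] (n : ℕ) : Prop :=
  ∀ 𝒰 : Set (Set Z), (∀ u ∈ 𝒰, IsOpen u) → ⋃₀ 𝒰 = univ →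
    ∃ 𝒱 : Set (Set Z), (∀ v ∈ 𝒱, IsOpen v) ∧ ⋃₀ 𝒱 = univ ∧
      (∀ v ∈ 𝒱, ∃ u ∈ 𝒰, v ⊆ u) ∧
      ∀ z : Z, {v ∈ 𝒱 | z ∈ v}.Finite ∧ {v ∈ 𝒱 | z ∈ v}.ncard ≤ n + 1

/-- `c_{f,n}(r)`: the supremum of numbers `B` such that there exist `n+1` points
with mutual Gromov products `< r` whose images have mutual Gromov products `≥ B`. -/
def cfn (a : X) (b : Y) (f : X → Y) (n : ℕ) (r : ℝ) : EReal :=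
  sSup {e : EReal | ∃ (B : ℝ) (x : Fin (n + 1) → X), e = (B : EReal) ∧
    (∀ i j, i ≠ j → gp a (x i) (x j) < r) ∧
    (∀ i j, i ≠ j → B ≤ gp b (f (x i)) (f (x j)))}

/-- a bornologous function is coarsely `n`-to-1 iff for every `R`
there is `S` such that among any `n+1` points with mutual distances `> S` two
points have images at distance `> R`. -/
theorem stmt15 {X : Type*} [MetricSpace X] {Y : Type*} [MetricSpace Y]
    (f : X → Y) (n : ℕ) (hb : Bornologous f) :
    CoarselyNto1 f n ↔
      ∀ R : ℝ, 0 < R → ∃ S : ℝ, 0 < S ∧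
        ∀ x : Fin (n + 1) → X, (∀ i j, i ≠ j → dist (x i) (x j) > S) →
          ∃ k m : Fin (n + 1), k ≠ m ∧ dist (f (x k)) (f (x m)) > R := by
  classical
  constructor
  · -- forward direction
    intro h R hR
    obtain ⟨S, hS, hcov⟩ := h (2 * R) (by linarith)
    refine ⟨S, hS, fun x hx => ?_⟩
    by_contra hc
    push_neg at hc
    set A := Set.range (fun i => f (x i)) with hA
    have hdiam : EMetric.diam A ≤ ENNReal.ofReal R := by
      apply EMetric.diam_le
      rintro _ ⟨i, rfl⟩ _ ⟨j, rfl⟩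
      rw [edist_le_ofReal hR.le]
      rcases eq_or_ne i j with rfl | hij
      · simp [hR.le]
      · exact hc i j hij
    obtain ⟨B, hBcov, hBdiam⟩ := hcov A
      (lt_of_le_of_lt hdiam (by
        apply ENNReal.ofReal_lt_ofReal_iff (by linarith) |>.2; linarith))
    have hmem : ∀ i, x i ∈ ⋃ j, B j := by
      intro i
      rw [← hBcov]
      exact Set.mem_range_self i
    choose g hg using fun i => Set.mem_iUnion.1 (hmem i)
    obtain ⟨i, j, hij, hgij⟩ := Fintype.exists_ne_map_eq_of_card_lt g (by simp)
    have : dist (x i) (x j) < S := by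
      rw [← edist_lt_ofReal]
      calc edist (x i) (x j) ≤ EMetric.diam (B (g i)) :=
            EMetric.edist_le_diam_of_mem (hg i) (hgij ▸ hg j)
        _ < ENNReal.ofReal S := hBdiam (g i)
    exact absurd (hx i j hij) (not_lt.2 this.le)
  · -- backward direction
    intro h R hR
    obtain ⟨S, hS, hsep⟩ := h R hR
    refine ⟨2 * S + 1, by linarith, fun A hA => ?_⟩
    set P := f ⁻¹' A with hP
    -- a finset of P which is pairwise S-separated has card ≤ n
    have key : ∀ T : Finset X, (↑T ⊆ P) →
        (∀ a ∈ T, ∀ b ∈ T, a ≠ b → dist a b > S) → T.card ≤ n := by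
      intro T hTP hTsep
      by_contra hcard
      push_neg at hcard
      obtain ⟨T', hT'sub, hT'card⟩ := Finset.exists_subset_card_eq hcard
      have e := T'.equivFinOfCardEq hT'card
      set x : Fin (n + 1) → X := fun i => ((e.symm i : T') : X) with hx
      have hxmem : ∀ i, x i ∈ T' := fun i => (e.symm i).2
      have hxsep : ∀ i j, i ≠ j → dist (x i) (x j) > S := by
        intro i j hij
        apply hTsep _ (hT'sub (hxmem i)) _ (hT'sub (hxmem j))
        intro hxy
        apply hij
        have : e.symm i = e.symm j := Subtype.ext hxy
        simpa using congrArg e this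
      obtain ⟨k, m, hkm, hfkm⟩ := hsep x hxsep
      have hfk : f (x k) ∈ A := hTP (hT'sub (hxmem k))
      have hfm : f (x m) ∈ A := hTP (hT'sub (hxmem m))
      have : dist (f (x k)) (f (x m)) < R := by
        rw [← edist_lt_ofReal]
        exact lt_of_le_of_lt (EMetric.edist_le_diam_of_mem hfk hfm) hA
      linarith
    -- choose a separated subset of maximal cardinality
    set Good : Set ℕ := {k : ℕ | ∃ T : Finset X, (↑T ⊆ P) ∧
        (∀ a ∈ T, ∀ b ∈ T, a ≠ b → dist a b > S) ∧ T.card = k} with hGood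
    have hGne : Good.Nonempty := ⟨0, ∅, by simp⟩
    have hGbdd : BddAbove Good := by
      refine ⟨n, fun k hk => ?_⟩
      obtain ⟨T, h1, h2, h3⟩ := hk
      exact h3 ▸ key T h1 h2
    obtain ⟨T, hTP, hTsep, hTcard⟩ := Nat.sSup_mem hGne hGbdd
    have hmax : ∀ p ∈ P, ∃ t ∈ T, dist p t ≤ S := by
      intro p hp
      by_contra hnone
      push_neg at hnone
      have hpT : p ∉ T := by
        intro hpT
        have := hnone p hpT
        simp [dist_self] at this
        linarith
      have hmem : (insert p T).card ∈ Good := by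
        refine ⟨insert p T, ?_, ?_, rfl⟩
        · intro z hz
          rcases Finset.mem_insert.1 hz with rfl | hz
          · exact hp
          · exact hTP hz
        · intro a ha b hb hab
          rcases Finset.mem_insert.1 ha with ha' | ha' <;>
            rcases Finset.mem_insert.1 hb with hb' | hb'
          · exact absurd (ha'.trans hb'.symm) hab
          · subst ha'; exact hnone b hb'
          · subst hb'; rw [dist_comm]; exact hnone a ha'
          · exact hTsep a ha' b hb' hab
      have := le_csSup hGbdd hmem
      rw [Finset.card_insert_of_notMem hpT, hTcard] at this
      omega
    -- build the cover
    set L := T.toList with hL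
    have hLlen : L.length ≤ n := by
      rw [hL, Finset.length_toList, hTcard]
      exact csSup_le hGne fun k hk => by
        obtain ⟨T', h1, h2, h3⟩ := hk; exact h3 ▸ key T' h1 h2
    refine ⟨fun i => if hi : (i : ℕ) < L.length
      then {p ∈ P | dist p (L.get ⟨i, hi⟩) ≤ S} else ∅, ?_, ?_⟩
    · apply Set.Subset.antisymm
      · intro p hp
        obtain ⟨t, htT, hpt⟩ := hmax p hp
        have htL : t ∈ L := by rw [hL, Finset.mem_toList]; exact htT
        obtain ⟨j, hjt⟩ := List.get_of_mem htL
        have hjn : (j : ℕ) < n := lt_of_lt_of_le j.2 hLlen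
        refine Set.mem_iUnion.2 ⟨⟨j, hjn⟩, ?_⟩
        have hjlt : ((⟨(j : ℕ), hjn⟩ : Fin n) : ℕ) < L.length := j.2
        show p ∈ if hi : ((⟨(j : ℕ), hjn⟩ : Fin n) : ℕ) < L.length
          then {p ∈ P | dist p (L.get ⟨(⟨(j : ℕ), hjn⟩ : Fin n), hi⟩) ≤ S} else ∅
        rw [dif_pos hjlt]
        refine ⟨hp, ?_⟩
        have : L.get ⟨(j : ℕ), hjlt⟩ = t := by
          rw [← hjt]
        rw [this]
        exact hpt
      · intro p hp
        obtain ⟨i, hi⟩ := Set.mem_iUnion.1 hp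
        by_cases hil : (i : ℕ) < L.length
        · rw [dif_pos hil] at hi; exact hi.1
        · rw [dif_neg hil] at hi; exact absurd hi (Set.notMem_empty p)
    · intro i
      beta_reduce
      by_cases hil : (i : ℕ) < L.length
      · rw [dif_pos hil]
        have hd : EMetric.diam {p ∈ P | dist p (L.get ⟨i, hil⟩) ≤ S}
            ≤ ENNReal.ofReal (2 * S) := by
          apply EMetric.diam_le
          intro a ha b hb
          rw [edist_le_ofReal (by linarith)]
          calc dist a b ≤ dist a (L.get ⟨i, hil⟩) + dist (L.get ⟨i, hil⟩) b :=
                dist_triangle _ _ _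
            _ ≤ S + S := add_le_add ha.2 (dist_comm (L.get ⟨i, hil⟩) b ▸ hb.2)
            _ = 2 * S := by ring
        exact lt_of_le_of_lt hd
          (ENNReal.ofReal_lt_ofReal_iff (by linarith) |>.2 (by linarith))
      · rw [dif_neg hil]
        rw [show EMetric.diam (∅ : Set X) = 0 from Metric.ediam_empty]
        exact ENNReal.ofReal_pos.2 (by linarith)

end Gromov
end
end

section
/- Let C = ∏_{i=1}^∞ {0,1} be the Cantor set with metric d((x_i),(y_i)) = Σ_{i=1}^∞ |x_i − y_i|/2^i, and let f : C → [0,1] be given by f((a_i)) = Σ_{i=1}^∞ a_i/2^i. Then f is 1-Lipschitz, and for any three points x₁, x₂, x₃ ∈ C satisfying d(x_i,x_j) > r for all i ≠ j, there are two different indices k, m ≤ 3 with |f(x_k) − f(x_m)| ≥ r/2. -/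
open Filter Metric Set

noncomputable section

namespace Gromov

variable {X : Type*} [MetricSpace X] {Y : Type*} [MetricSpace Y]

/-- The metric on the Cantor set `C = ∏_{i=1}^∞ {0,1}`:
`d((x_i),(y_i)) = Σ_{i=1}^∞ |x_i − y_i|/2^i`. -/
noncomputable def cantorDist (x y : ℕ → Fin 2) : ℝ :=
  ∑' i : ℕ, |(x i : ℝ) - (y i : ℝ)| / 2 ^ (i + 1)

/-- The binary-expansion map `f((a_i)) = Σ_{i=1}^∞ a_i/2^i` from the Cantor set
to `[0,1]`. -/
noncomputable def binMap (x : ℕ → Fin 2) : ℝ :=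
  ∑' i : ℕ, (x i : ℝ) / 2 ^ (i + 1)

set_option maxHeartbeats 1000000

lemma val_le_one (a : Fin 2) : (a : ℝ) ≤ 1 := by
  have h : (a : ℕ) ≤ 1 := Nat.lt_succ_iff.mp a.isLt
  exact_mod_cast h

lemma val_nonneg (a : Fin 2) : (0:ℝ) ≤ (a : ℝ) := by positivity

lemma pow_split (k i : ℕ) : ((1:ℝ)/2)^(i+k+1) = ((1:ℝ)/2)^i * ((1:ℝ)/2)^(k+1) := by
  rw [add_assoc, pow_add]

lemma summable_pow (k : ℕ) : Summable (fun i : ℕ => ((1:ℝ)/2)^(i+k+1)) :=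
  (summable_geometric_two.mul_right (((1:ℝ)/2)^(k+1))).congr
    (fun i => (pow_split k i).symm)

lemma tsum_pow (k : ℕ) : ∑' i : ℕ, ((1:ℝ)/2)^(i+k+1) = ((1:ℝ)/2)^k := by
  rw [tsum_congr (pow_split k), tsum_mul_right, tsum_geometric_two, pow_succ]
  ring

lemma abs_val_sub_le_one (a b : Fin 2) : |(a:ℝ) - (b:ℝ)| ≤ 1 := by
  have h1 := val_nonneg a; have h2 := val_le_one a
  have h3 := val_nonneg b; have h4 := val_le_one b
  exact abs_le.mpr ⟨by linarith, by linarith⟩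

lemma term_le (a : Fin 2) (n : ℕ) : (a : ℝ) / 2^(n+1) ≤ ((1:ℝ)/2)^(n+1) := by
  rw [div_pow, one_pow]
  gcongr
  exact val_le_one a

lemma summable_binMap (a : ℕ → Fin 2) :
    Summable (fun i : ℕ => (a i : ℝ) / 2 ^ (i + 1)) := by
  refine Summable.of_nonneg_of_le (fun i => by positivity) (fun i => term_le _ _) ?_
  simpa using summable_pow 0

lemma summable_shift (a : ℕ → Fin 2) (k : ℕ) :
    Summable (fun i : ℕ => (a (i + k) : ℝ) / 2 ^ (i + k + 1)) := by
  refine Summable.of_nonneg_of_le (fun i => by positivity) (fun i => term_le _ _)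
    (summable_pow k)

noncomputable def tailSum (a : ℕ → Fin 2) (k : ℕ) : ℝ :=
  ∑' i : ℕ, (a (i + k) : ℝ) / 2 ^ (i + k + 1)

lemma binMap_split (a : ℕ → Fin 2) (k : ℕ) :
    binMap a = (∑ i ∈ Finset.range k, (a i : ℝ) / 2^(i+1)) + tailSum a k := by
  rw [binMap, tailSum]
  exact (Summable.sum_add_tsum_nat_add k (summable_binMap a)).symm

lemma tailSum_nonneg (a : ℕ → Fin 2) (k : ℕ) : 0 ≤ tailSum a k :=
  tsum_nonneg (fun i => by positivity)

lemma tailSum_le (a : ℕ → Fin 2) (k : ℕ) : tailSum a k ≤ ((1:ℝ)/2)^k := by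
  calc tailSum a k ≤ ∑' i : ℕ, ((1:ℝ)/2)^(i+k+1) :=
        Summable.tsum_le_tsum (fun i => term_le _ _) (summable_shift a k) (summable_pow k)
    _ = ((1:ℝ)/2)^k := tsum_pow k

lemma tailSum_ge (a : ℕ → Fin 2) {k n : ℕ} (h : a n = 1) (hk : k ≤ n) :
    ((1:ℝ)/2)^(n+1) ≤ tailSum a k := by
  have := Summable.le_tsum (summable_shift a k) (n - k) (fun j _ => by positivity)
  rw [Nat.sub_add_cancel hk, h] at this
  calc ((1:ℝ)/2)^(n+1) = (((1 : Fin 2)) : ℝ) / 2^(n+1) := by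
        rw [div_pow, one_pow]; norm_num
    _ ≤ tailSum a k := this

lemma tailSum_le_sub (a : ℕ → Fin 2) {k n : ℕ} (h : a n = 0) (hk : k ≤ n) :
    tailSum a k ≤ ((1:ℝ)/2)^k - ((1:ℝ)/2)^(n+1) := by
  have hs1 := summable_shift a k
  have hs2 : Summable (fun i : ℕ => if i = n - k then ((1:ℝ)/2)^(n+1) else 0) :=
    (hasSum_ite_eq (n - k) (((1:ℝ)/2)^(n+1))).summable
  have key : tailSum a k + ((1:ℝ)/2)^(n+1) ≤ ((1:ℝ)/2)^k := by
    have h1 : tailSum a k + ((1:ℝ)/2)^(n+1)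
        = ∑' i : ℕ, ((a (i + k) : ℝ) / 2 ^ (i + k + 1)
            + if i = n - k then ((1:ℝ)/2)^(n+1) else 0) := by
      rw [Summable.tsum_add hs1 hs2, tailSum, tsum_ite_eq]
    rw [h1]
    calc ∑' i : ℕ, ((a (i + k) : ℝ) / 2 ^ (i + k + 1)
            + if i = n - k then ((1:ℝ)/2)^(n+1) else 0)
        ≤ ∑' i : ℕ, ((1:ℝ)/2)^(i+k+1) := by
          refine Summable.tsum_le_tsum (fun i => ?_) (hs1.add hs2) (summable_pow k)
          by_cases hi : i = n - k
          · subst hi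
            rw [Nat.sub_add_cancel hk] at *
            simp [h, Nat.sub_add_cancel hk]
          · simp only [hi, if_false, add_zero]
            exact term_le _ _
      _ = ((1:ℝ)/2)^k := tsum_pow k
  linarith

lemma binMap_key {p q : ℕ → Fin 2} {m : ℕ} (h : ∀ i < m, p i = q i)
    (hp : p m = 1) (hq : q m = 0) :
    binMap p - binMap q = ((1:ℝ)/2)^(m+1) + tailSum p (m+1) - tailSum q (m+1) := by
  rw [binMap_split p (m+1), binMap_split q (m+1)]
  have hsum : ∑ i ∈ Finset.range (m+1), (p i : ℝ) / 2^(i+1)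
      = (∑ i ∈ Finset.range (m+1), (q i : ℝ) / 2^(i+1)) + ((1:ℝ)/2)^(m+1) := by
    rw [Finset.sum_range_succ, Finset.sum_range_succ]
    have he : ∑ i ∈ Finset.range m, (p i : ℝ) / 2^(i+1)
        = ∑ i ∈ Finset.range m, (q i : ℝ) / 2^(i+1) := by
      refine Finset.sum_congr rfl (fun i hi => ?_)
      rw [h i (Finset.mem_range.mp hi)]
    rw [he, hp, hq, div_pow, one_pow]
    simp
  linarith

lemma cantorDist_le {x y : ℕ → Fin 2} {n : ℕ} (h : ∀ i < n, x i = y i) :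
    cantorDist x y ≤ ((1:ℝ)/2)^n := by
  have hbnd : ∀ i : ℕ, |(x i : ℝ) - (y i : ℝ)| / 2 ^ (i + 1) ≤ ((1:ℝ)/2)^(i+1) := by
    intro i
    rw [div_pow, one_pow]
    gcongr
    exact abs_val_sub_le_one _ _
  have hsum : Summable (fun i : ℕ => |(x i : ℝ) - (y i : ℝ)| / 2 ^ (i + 1)) :=
    Summable.of_nonneg_of_le (fun i => by positivity) hbnd (by simpa using summable_pow 0)
  rw [cantorDist, ← Summable.sum_add_tsum_nat_add n hsum]
  have hz : ∑ i ∈ Finset.range n, |(x i : ℝ) - (y i : ℝ)| / 2 ^ (i + 1) = 0 := by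
    refine Finset.sum_eq_zero (fun i hi => ?_)
    rw [h i (Finset.mem_range.mp hi)]
    simp
  have ht : ∑' i : ℕ, |(x (i + n) : ℝ) - (y (i + n) : ℝ)| / 2 ^ (i + n + 1)
      ≤ ((1:ℝ)/2)^n := by
    calc ∑' i : ℕ, |(x (i + n) : ℝ) - (y (i + n) : ℝ)| / 2 ^ (i + n + 1)
        ≤ ∑' i : ℕ, ((1:ℝ)/2)^(i+n+1) :=
          Summable.tsum_le_tsum (fun i => hbnd (i + n))
            (Summable.of_nonneg_of_le (fun i => by positivity)
              (fun i => hbnd (i + n)) (summable_pow n))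
            (summable_pow n)
      _ = ((1:ℝ)/2)^n := tsum_pow n
  linarith

lemma cantorDist_comm (x y : ℕ → Fin 2) : cantorDist x y = cantorDist y x := by
  unfold cantorDist
  exact tsum_congr (fun i => by rw [abs_sub_comm])

lemma exists_diff {r : ℝ} (hr : 0 < r) {p q : ℕ → Fin 2}
    (hd : r < cantorDist p q) : ∃ n, p n ≠ q n := by
  by_contra hc
  push_neg at hc
  have hzero : cantorDist p q = 0 := by
    rw [cantorDist]
    have h0 : ∀ i : ℕ, |(p i : ℝ) - (q i : ℝ)| / 2 ^ (i + 1) = 0 := by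
      intro i; rw [hc i]; simp
    rw [tsum_congr h0, tsum_zero]
  linarith

lemma fin2_resolve {a b : Fin 2} (h : a ≠ b) : (a = 1 ∧ b = 0) ∨ (a = 0 ∧ b = 1) := by
  revert h; revert a b; decide

lemma fin2_third {a b c : Fin 2} (h1 : a ≠ b) (h2 : a ≠ c) : b = c := by
  revert h1 h2; revert a b c; decide

lemma core' (r : ℝ) (z p q : ℕ → Fin 2) (m n : ℕ) (hmn : m < n)
    (hbzp : ∀ i < m, z i = p i) (hbzq : ∀ i < m, z i = q i)
    (hzp : z m ≠ p m) (hpq : p m = q m)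
    (hbpq : ∀ i < n, p i = q i) (hpn : p n = 1) (hqn : q n = 0)
    (h1 : binMap p - binMap z < r / 2) (h2 : binMap z - binMap q < r / 2)
    (hd : r < cantorDist p q) : False := by
  have hrn : r / 2 < ((1:ℝ)/2)^(n+1) := by
    have hle := cantorDist_le hbpq
    have hps : ((1:ℝ)/2)^n = 2 * ((1:ℝ)/2)^(n+1) := by rw [pow_succ]; ring
    linarith
  have hmn' : m + 1 ≤ n := hmn
  rcases fin2_resolve hzp with ⟨hz1, hp0⟩ | ⟨hz0, hp1⟩
  · -- z m = 1, p m = 0, q m = 0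
    have hq0 : q m = 0 := hpq ▸ hp0
    have hkey := binMap_key hbzq hz1 hq0
    have ht1 := tailSum_nonneg z (m+1)
    have ht2 := tailSum_le_sub q hqn hmn'
    linarith
  · -- z m = 0, p m = 1
    have hkey := binMap_key (fun i hi => (hbzp i hi).symm) hp1 hz0
    have ht1 := tailSum_le z (m+1)
    have ht2 := tailSum_ge p hpn hmn'
    linarith

lemma core (r : ℝ) (hr : 0 < r) (z p q : ℕ → Fin 2) (m : ℕ)
    (hbzp : ∀ i < m, z i = p i) (hbzq : ∀ i < m, z i = q i)
    (hzp : z m ≠ p m) (hpq : p m = q m)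
    (h1 : |binMap p - binMap z| < r / 2) (h2 : |binMap q - binMap z| < r / 2)
    (hd : r < cantorDist p q) : False := by
  have hex : ∃ n, p n ≠ q n := exists_diff hr hd
  classical
  set n := Nat.find hex with hn
  have hdiff : p n ≠ q n := Nat.find_spec hex
  have hbpq : ∀ i < n, p i = q i := fun i hi => by
    by_contra hc; exact absurd (Nat.find_le hc) (not_le.mpr hi)
  have hmn : m < n := by
    rcases lt_or_ge m n with hcase | hcase
    · exact hcase
    · exfalso
      rcases eq_or_lt_of_le hcase with h' | h'
      · exact hdiff (h' ▸ hpq)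
      · exact hdiff ((hbzp n h').symm.trans (hbzq n h'))
  have h1a := (abs_lt.mp h1).2
  have h1b := (abs_lt.mp h1).1
  have h2a := (abs_lt.mp h2).2
  have h2b := (abs_lt.mp h2).1
  rcases fin2_resolve hdiff with ⟨hpn, hqn⟩ | ⟨hpn, hqn⟩
  · exact core' r z p q m n hmn hbzp hbzq hzp hpq hbpq hpn hqn h1a (by linarith) hd
  · refine core' r z q p m n hmn hbzq hbzp (hpq ▸ hzp) hpq.symm
      (fun i hi => (hbpq i hi).symm) hqn hpn h2a (by linarith) ?_
    rwa [cantorDist_comm] at hd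

/-- the binary-expansion map is 1-Lipschitz and, among any three
points of the Cantor set with mutual distances `> r`, two have images at
distance `≥ r/2`. -/
theorem stmt19 :
    (∀ x y : ℕ → Fin 2, |binMap x - binMap y| ≤ cantorDist x y) ∧
    (∀ (r : ℝ) (x : Fin 3 → (ℕ → Fin 2)),
      (∀ i j : Fin 3, i ≠ j → cantorDist (x i) (x j) > r) →
      ∃ k m : Fin 3, k ≠ m ∧ |binMap (x k) - binMap (x m)| ≥ r / 2) := by
  constructor
  · intro x y
    have hx := summable_binMap x
    have hy := summable_binMap y
    rw [binMap, binMap, ← Summable.tsum_sub hx hy]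
    have hsub : Summable (fun i : ℕ => (x i : ℝ) / 2 ^ (i + 1) - (y i : ℝ) / 2 ^ (i + 1)) :=
      hx.sub hy
    calc |∑' i : ℕ, ((x i : ℝ) / 2 ^ (i + 1) - (y i : ℝ) / 2 ^ (i + 1))|
        ≤ ∑' i : ℕ, |(x i : ℝ) / 2 ^ (i + 1) - (y i : ℝ) / 2 ^ (i + 1)| := by
          simpa [Real.norm_eq_abs] using norm_tsum_le_tsum_norm (f := fun i : ℕ =>
            (x i : ℝ) / 2 ^ (i + 1) - (y i : ℝ) / 2 ^ (i + 1))
            (by simpa [Real.norm_eq_abs] using hsub.abs)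
      _ = cantorDist x y := by
          rw [cantorDist]
          refine tsum_congr (fun i => ?_)
          rw [div_sub_div_same, abs_div, abs_of_pos (by positivity : (0:ℝ) < 2 ^ (i+1))]
  · intro r x hsep
    rcases le_or_gt r 0 with hr | hr
    · exact ⟨0, 1, by decide, le_trans (by linarith) (abs_nonneg _)⟩
    · by_contra hall
      push_neg at hall
      have hlt : ∀ k m : Fin 3, k ≠ m → |binMap (x k) - binMap (x m)| < r / 2 :=
        fun k m hkm => hall k m hkm
      have hex : ∃ i, ¬(x 0 i = x 1 i ∧ x 1 i = x 2 i) := by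
        rcases exists_diff hr (hsep 0 1 (by decide)) with ⟨i, hi⟩
        exact ⟨i, fun h => hi h.1⟩
      classical
      set m := Nat.find hex with hm
      have hspec := Nat.find_spec hex
      have hb : ∀ i < m, x 0 i = x 1 i ∧ x 1 i = x 2 i := fun i hi => by
        by_contra hc; exact absurd (Nat.find_le hc) (not_le.mpr hi)
      by_cases h01 : x 0 m = x 1 m
      · have h12 : x 1 m ≠ x 2 m := fun h => hspec ⟨h01, h⟩
        exact core r hr (x 2) (x 0) (x 1) m
          (fun i hi => ((hb i hi).1.trans (hb i hi).2).symm)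
          (fun i hi => (hb i hi).2.symm)
          (fun h => h12 (h01.symm.trans h.symm)) h01
          (hlt 0 2 (by decide)) (hlt 1 2 (by decide)) (hsep 0 1 (by decide))
      · by_cases h02 : x 0 m = x 2 m
        · have h12 : x 1 m ≠ x 2 m := fun h => h01 (h02.trans h.symm)
          exact core r hr (x 1) (x 0) (x 2) m
            (fun i hi => (hb i hi).1.symm)
            (fun i hi => (hb i hi).2)
            (Ne.symm h01) h02
            (hlt 0 1 (by decide)) (hlt 2 1 (by decide)) (hsep 0 2 (by decide))
        · have h12 : x 1 m = x 2 m := fin2_third h01 h02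
          exact core r hr (x 0) (x 1) (x 2) m
            (fun i hi => (hb i hi).1)
            (fun i hi => (hb i hi).1.trans (hb i hi).2)
            h01 h12
            (hlt 1 0 (by decide)) (hlt 2 0 (by decide)) (hsep 1 2 (by decide))

end Gromov
end
end
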